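/- For every b ≥ 0 there exists a finite constant C(b) (depending only on b, m, and r̃_1,…,r̃_m) such that for all t > 0 and all x ∈ ℤ: p_t(x) ≤ C(b) · min(1, t^{−1/2}) · exp( −b |x| · min(1, t^{−1/2}) ). -/

import Mathlib

open Finset

/-- `φ(θ) := Σ_{k=1}^m r̃_k (1 − cos(kθ))`. -/
noncomputable def phiFn (m : ℕ) (r : ℕ → ℝ) (θ : ℝ) : ℝ :=
  ∑ k ∈ Finset.Icc 1 m, r k * (1 - Real.cos (k * θ))

/-- The semi-discrete heat kernel
`p_t(x) := (2π)⁻¹ ∫_{−π}^{π} e^{−ixθ} e^{−tφ(θ)} dθ`, a real number since `φ` is even. -/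
noncomputable def hk (m : ℕ) (r : ℕ → ℝ) (t : ℝ) (x : ℤ) : ℝ :=
  ((2 * (Real.pi : ℂ))⁻¹ * ∫ θ in (-Real.pi)..Real.pi,
      Complex.exp (-(x : ℂ) * Complex.I * (θ : ℂ)) *
        Complex.exp (-(t : ℂ) * ((phiFn m r θ : ℝ) : ℂ))).re

open Real
set_option maxHeartbeats 1000000


lemma sinh_le_mul_exp (u : ℝ) (hu : 0 ≤ u) : Real.sinh u ≤ u * Real.exp u := by
  have h1 : (-(2*u)) + 1 ≤ Real.exp (-(2*u)) := Real.add_one_le_exp _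
  have h2 : Real.exp (-u) = Real.exp u * Real.exp (-(2*u)) := by
    rw [← Real.exp_add]; ring_nf
  have h3 : 0 < Real.exp u := Real.exp_pos u
  rw [Real.sinh_eq, h2]
  nlinarith

lemma cosh_sub_one_le (y Y : ℝ) (hY : |y| ≤ Y) :
    Real.cosh y - 1 ≤ y^2/2 * Real.exp Y := by
  have h0 : 0 ≤ Y := le_trans (abs_nonneg y) hY
  have hid : Real.cosh y - 1 = 2 * Real.sinh (y/2)^2 := by
    have := Real.cosh_two_mul (y/2)
    have h2 := Real.cosh_sq' (y/2)
    have : Real.cosh y = Real.cosh (2*(y/2)) := by ring_nf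
    rw [this, Real.cosh_two_mul (y/2), h2]; ring
  rw [hid]
  have habs : Real.sinh (y/2)^2 = Real.sinh (|y|/2)^2 := by
    rcases abs_cases y with ⟨h,_⟩|⟨h,_⟩
    · rw [h]
    · rw [h]; rw [show -y/2 = -(y/2) by ring, Real.sinh_neg]; ring
  have h4 : Real.sinh (|y|/2) ≤ (|y|/2) * Real.exp (|y|/2) :=
    sinh_le_mul_exp _ (by positivity)
  have h5 : 0 ≤ Real.sinh (|y|/2) := Real.sinh_nonneg_iff.2 (by positivity)
  have h6 : Real.sinh (|y|/2)^2 ≤ ((|y|/2) * Real.exp (|y|/2))^2 := by nlinarith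
  have h7 : Real.exp (|y|/2) ^ 2 = Real.exp (|y|) := by
    rw [sq, ← Real.exp_add]; ring_nf
  have h8 : Real.exp (|y|) ≤ Real.exp Y := Real.exp_le_exp.2 hY
  have h9 : (|y|/2)^2 = y^2/4 := by rw [div_pow, sq_abs]; ring
  rw [habs]
  calc 2 * Real.sinh (|y|/2)^2 ≤ 2 * (((|y|/2))^2 * Real.exp (|y|/2)^2) := by nlinarith
    _ = y^2/2 * Real.exp (|y|) := by rw [h7, h9]; ring
    _ ≤ y^2/2 * Real.exp Y := by nlinarith [sq_nonneg y]

noncomputable def phiC (m : ℕ) (r : ℕ → ℝ) (z : ℂ) : ℂ :=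
  ∑ k ∈ Finset.Icc 1 m, (r k : ℂ) * (1 - Complex.cos (k * z))


lemma phiC_ofReal (m : ℕ) (r : ℕ → ℝ) (θ : ℝ) :
    phiC m r (θ : ℂ) = ((phiFn m r θ : ℝ) : ℂ) := by
  simp only [phiC, phiFn, Complex.ofReal_sum, Complex.ofReal_mul, Complex.ofReal_sub,
    Complex.ofReal_one, Complex.ofReal_cos]
  push_cast
  rfl

lemma phiC_diff (m : ℕ) (r : ℕ → ℝ) : Differentiable ℂ (phiC m r) := by
  apply Differentiable.fun_sum
  intro k _
  exact (differentiable_const _).mul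
    ((differentiable_const _).sub (Complex.differentiable_cos.comp (differentiable_id.const_mul _)))

lemma phiC_periodic (m : ℕ) (r : ℕ → ℝ) (z : ℂ) :
    phiC m r (z + 2 * Real.pi) = phiC m r z := by
  unfold phiC
  apply Finset.sum_congr rfl
  intro k _
  congr 1
  congr 1
  have : (k : ℂ) * (z + 2 * Real.pi) = k * z + (k : ℤ) * (2 * Real.pi) := by push_cast; ring
  rw [this, Complex.cos_add_int_mul_two_pi]

lemma g_periodic (m : ℕ) (r : ℕ → ℝ) (t : ℝ) (x : ℤ) (z : ℂ) :
    Complex.exp (-(x : ℂ) * Complex.I * (z + 2 * Real.pi)) *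
      Complex.exp (-(t : ℂ) * phiC m r (z + 2 * Real.pi)) =
    Complex.exp (-(x : ℂ) * Complex.I * z) * Complex.exp (-(t : ℂ) * phiC m r z) := by
  rw [phiC_periodic]
  congr 1
  rw [mul_add, Complex.exp_add]
  have : -(x : ℂ) * Complex.I * (2 * Real.pi) = ((-x : ℤ) : ℂ) * (2 * Real.pi * Complex.I) := by
    push_cast; ring
  rw [this, Complex.exp_int_mul_two_pi_mul_I, mul_one]

lemma g_diff (m : ℕ) (r : ℕ → ℝ) (t : ℝ) (x : ℤ) :
    Differentiable ℂ (fun z => Complex.exp (-(x : ℂ) * Complex.I * z) *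
      Complex.exp (-(t : ℂ) * phiC m r z)) := by
  exact ((differentiable_id.const_mul _).cexp).mul (((phiC_diff m r).const_mul _).cexp)

lemma contour_shift (f : ℂ → ℂ) (hd : Differentiable ℂ f)
    (hp : ∀ z, f (z + 2 * Real.pi) = f z) (a : ℝ) :
    (∫ θ : ℝ in (-Real.pi)..Real.pi, f θ) =
      ∫ θ : ℝ in (-Real.pi)..Real.pi, f (θ + a * Complex.I) := by
  have H := Complex.integral_boundary_rect_eq_zero_of_differentiableOn f
    ((-Real.pi : ℝ) : ℂ) (((Real.pi : ℝ) : ℂ) + (a : ℂ) * Complex.I)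
    hd.differentiableOn
  simp only [Complex.add_re, Complex.add_im, Complex.ofReal_re, Complex.ofReal_im,
    Complex.mul_re, Complex.mul_im, Complex.I_re, Complex.I_im, mul_zero, mul_one,
    zero_mul, sub_zero, zero_add, add_zero, zero_sub, neg_zero, Complex.ofReal_zero] at H
  have hv : (∫ y in (0:ℝ)..a, f ((Real.pi : ℂ) + y * Complex.I)) =
      ∫ y in (0:ℝ)..a, f (((-Real.pi : ℝ) : ℂ) + y * Complex.I) := by
    apply intervalIntegral.integral_congr
    intro y _
    show f _ = f _
    rw [← hp (((-Real.pi : ℝ) : ℂ) + y * Complex.I)]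
    congr 1
    push_cast; ring
  rw [hv] at H
  linear_combination H


lemma phiC_re (m : ℕ) (r : ℕ → ℝ) (θ a : ℝ) :
    (phiC m r ((θ : ℂ) + (a : ℂ) * Complex.I)).re =
      ∑ k ∈ Finset.Icc 1 m, r k * (1 - Real.cos (k * θ) * Real.cosh (k * a)) := by
  unfold phiC
  rw [Complex.re_sum]
  apply Finset.sum_congr rfl
  intro k _
  have hz : (k : ℂ) * ((θ : ℂ) + (a : ℂ) * Complex.I) =
      (((k * θ : ℝ)) : ℂ) + (((k * a : ℝ)) : ℂ) * Complex.I := by push_cast; ring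
  rw [hz, Complex.cos_add_mul_I]
  simp only [Complex.mul_re, Complex.mul_im, Complex.sub_re, Complex.sub_im, Complex.one_re,
    Complex.one_im, Complex.ofReal_re, Complex.ofReal_im, Complex.I_re, Complex.I_im,
    Complex.cos_ofReal_re, Complex.cos_ofReal_im, Complex.sin_ofReal_re, Complex.sin_ofReal_im,
    Complex.cosh_ofReal_re, Complex.cosh_ofReal_im, Complex.sinh_ofReal_re, Complex.sinh_ofReal_im]
  ring

lemma xa_re (x : ℤ) (θ a : ℝ) :
    (-(x : ℂ) * Complex.I * ((θ : ℂ) + (a : ℂ) * Complex.I)).re = x * a := by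
  simp only [neg_mul, Complex.neg_re, Complex.mul_re, Complex.mul_im, Complex.add_re,
    Complex.add_im, Complex.ofReal_re, Complex.ofReal_im, Complex.I_re, Complex.I_im,
    Complex.intCast_re, Complex.intCast_im]
  ring


lemma phiFn_continuous (m : ℕ) (r : ℕ → ℝ) : Continuous (phiFn m r) := by
  unfold phiFn
  apply continuous_finset_sum
  intro k _
  exact continuous_const.mul (continuous_const.sub
    (Real.continuous_cos.comp (continuous_const.mul continuous_id)))

lemma phiFn_nonneg (m : ℕ) (r : ℕ → ℝ) (hr : ∀ k ∈ Finset.Icc 1 m, 0 < r k) (θ : ℝ) :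
    0 ≤ phiFn m r θ := by
  apply Finset.sum_nonneg
  intro k hk
  have h1 := Real.cos_le_one (k * θ)
  have h2 := (hr k hk).le
  show 0 ≤ r k * (1 - Real.cos (k * θ))
  nlinarith

lemma one_sub_cos_ge (θ : ℝ) (hθ : |θ| ≤ π) : 2 * θ^2 ≤ π^2 * (1 - Real.cos θ) := by
  have hπ : 0 < π := Real.pi_pos
  have hid : 1 - Real.cos θ = 2 * Real.sin (θ/2)^2 := by
    have h1 : Real.cos θ = Real.cos (2 * (θ/2)) := by ring_nf
    rw [h1, Real.cos_two_mul]
    have := Real.sin_sq_add_cos_sq (θ/2)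
    nlinarith
  have habs : Real.sin (θ/2)^2 = Real.sin (|θ|/2)^2 := by
    rcases abs_cases θ with ⟨h,_⟩|⟨h,_⟩
    · rw [h]
    · rw [h, show -θ/2 = -(θ/2) by ring, Real.sin_neg]; ring
  have hj : 2/π * (|θ|/2) ≤ Real.sin (|θ|/2) :=
    Real.mul_le_sin (by positivity) (by cases abs_cases θ with
      | inl h => rw [h.1]; linarith
      | inr h => rw [h.1]; linarith)
  have hnn : 0 ≤ 2/π * (|θ|/2) := by positivity
  have hsq : (2/π * (|θ|/2))^2 ≤ Real.sin (|θ|/2)^2 := by nlinarith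
  have heq : (2/π * (|θ|/2))^2 = θ^2/π^2 := by
    rw [show 2/π * (|θ|/2) = |θ|/π by field_simp, div_pow, sq_abs]
  rw [heq, div_le_iff₀ (by positivity)] at hsq
  rw [hid, habs]
  nlinarith

lemma gauss_int_le (m : ℕ) (hm : 1 ≤ m) (r : ℕ → ℝ) (hr : ∀ k ∈ Finset.Icc 1 m, 0 < r k)
    (t : ℝ) (ht : 0 < t) :
    (∫ θ in (-π)..π, Real.exp (-t * phiFn m r θ)) ≤
      (2 * π + Real.sqrt (π / (2 * r 1 / π^2))) * min 1 (t ^ (-(1/2) : ℝ)) := by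
  have hπ : 0 < π := Real.pi_pos
  have h1m : 1 ∈ Finset.Icc 1 m := by simp [hm]
  have hr1 : 0 < r 1 := hr 1 h1m
  set c : ℝ := 2 * r 1 / π^2 with hc
  have hcpos : 0 < c := by positivity
  have hlow : ∀ θ ∈ Set.Icc (-π) π, c * θ^2 ≤ phiFn m r θ := by
    intro θ hθ
    have habs : |θ| ≤ π := abs_le.2 ⟨hθ.1, hθ.2⟩
    have h1 : r 1 * (1 - Real.cos ((1:ℕ) * θ)) ≤ phiFn m r θ := by
      apply Finset.single_le_sum (f := fun k => r k * (1 - Real.cos (k * θ))) _ h1m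
      intro k hk
      have hcl := Real.cos_le_one (k * θ)
      have hrk := (hr k hk).le
      show 0 ≤ r k * (1 - Real.cos (k * θ))
      nlinarith
    norm_num at h1
    have h2 := one_sub_cos_ge θ habs
    have h3 : c * θ^2 ≤ r 1 * (1 - Real.cos θ) := by
      rw [hc, div_mul_eq_mul_div, div_le_iff₀ (by positivity)]
      nlinarith
    exact le_trans h3 h1
  have hnpp : -π ≤ π := by linarith
  have hcont : Continuous fun θ => Real.exp (-t * phiFn m r θ) :=
    Real.continuous_exp.comp (continuous_const.mul (phiFn_continuous m r))
  rcases le_total t 1 with h1 | h1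
  · have hmin : min 1 (t ^ (-(1/2) : ℝ)) = 1 :=
      min_eq_left (Real.one_le_rpow_of_pos_of_le_one_of_nonpos ht h1 (by norm_num))
    rw [hmin, mul_one]
    have hint : (∫ θ in (-π)..π, Real.exp (-t * phiFn m r θ)) ≤ ∫ _ in (-π)..π, (1:ℝ) := by
      apply intervalIntegral.integral_mono_on hnpp (hcont.intervalIntegrable _ _) (by simp)
      intro θ _
      rw [Real.exp_le_one_iff]
      have := phiFn_nonneg m r hr θ
      nlinarith
    rw [intervalIntegral.integral_const] at hint
    simp only [smul_eq_mul, mul_one] at hint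
    have hs : 0 ≤ Real.sqrt (π / c) := Real.sqrt_nonneg _
    calc (∫ θ in (-π)..π, Real.exp (-t * phiFn m r θ)) ≤ π - -π := hint
      _ ≤ 2 * π + Real.sqrt (π / c) := by linarith
  · have hmin : min 1 (t ^ (-(1/2) : ℝ)) = t ^ (-(1/2) : ℝ) :=
      min_eq_right (Real.rpow_le_one_of_one_le_of_nonpos h1 (by norm_num))
    rw [hmin]
    have step1 : (∫ θ in (-π)..π, Real.exp (-t * phiFn m r θ)) ≤
        ∫ θ in (-π)..π, Real.exp (-(t*c) * θ^2) := by
      have hcont2 : Continuous fun θ : ℝ => Real.exp (-(t*c) * θ^2) := by fun_prop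
      apply intervalIntegral.integral_mono_on hnpp (hcont.intervalIntegrable _ _)
        (hcont2.intervalIntegrable _ _)
      intro θ hθ
      apply Real.exp_le_exp.2
      have := hlow θ hθ
      nlinarith
    have step2 : (∫ θ in (-π)..π, Real.exp (-(t*c) * θ^2)) ≤
        ∫ θ : ℝ, Real.exp (-(t*c) * θ^2) := by
      rw [intervalIntegral.integral_of_le hnpp]
      apply MeasureTheory.setIntegral_le_integral (integrable_exp_neg_mul_sq (by positivity))
      filter_upwards with θ using Real.exp_nonneg _
    have step3 : (∫ θ : ℝ, Real.exp (-(t*c) * θ^2)) = Real.sqrt (π / (t*c)) :=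
      integral_gaussian (t*c)
    have hti : Real.sqrt t⁻¹ = t ^ (-(1/2) : ℝ) := by
      rw [Real.sqrt_inv, Real.sqrt_eq_rpow, ← Real.rpow_neg ht.le]
    have h5 : π / (t*c) = (π / c) * t⁻¹ := by
      rw [mul_comm, ← div_div, div_eq_mul_inv]
    have step4 : Real.sqrt (π / (t*c)) = Real.sqrt (π / c) * t ^ (-(1/2) : ℝ) := by
      rw [h5, Real.sqrt_mul (by positivity), hti]
    have hrpow : 0 ≤ t ^ (-(1/2) : ℝ) := Real.rpow_nonneg ht.le _
    have hs : 0 ≤ Real.sqrt (π / c) := Real.sqrt_nonneg _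
    calc (∫ θ in (-π)..π, Real.exp (-t * phiFn m r θ))
        ≤ Real.sqrt (π / c) * t ^ (-(1/2) : ℝ) := by
          rw [← step4, ← step3]; exact le_trans step1 step2
      _ ≤ (2 * π + Real.sqrt (π / c)) * t ^ (-(1/2) : ℝ) := by nlinarith



theorem stmt9 (m : ℕ) (hm : 1 ≤ m) (r : ℕ → ℝ) (hr : ∀ k ∈ Finset.Icc 1 m, 0 < r k) :
    ∀ b : ℝ, 0 ≤ b → ∃ C : ℝ, ∀ t : ℝ, 0 < t → ∀ x : ℤ,
      hk m r t x ≤ C * min 1 (t ^ (-(1/2) : ℝ)) *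
        Real.exp (-b * |(x : ℝ)| * min 1 (t ^ (-(1/2) : ℝ))) := by
  intro b hb
  have hπ : 0 < Real.pi := Real.pi_pos
  set M : ℝ := ∑ k ∈ Finset.Icc 1 m, r k * ((k * b)^2/2 * Real.exp (k * b)) with hM
  set K : ℝ := 2 * Real.pi + Real.sqrt (Real.pi / (2 * r 1 / Real.pi^2)) with hK
  refine ⟨(2 * Real.pi)⁻¹ * Real.exp M * K, ?_⟩
  intro t ht x
  set mn : ℝ := min 1 (t ^ (-(1/2) : ℝ)) with hmn
  have hmn0 : 0 ≤ mn := le_min zero_le_one (Real.rpow_nonneg ht.le _)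
  have hmn1 : mn ≤ 1 := min_le_left _ _
  have hmn2 : t * mn^2 ≤ 1 := by
    have h1 : mn ≤ t ^ (-(1/2) : ℝ) := min_le_right _ _
    have h2 : (t ^ (-(1/2) : ℝ))^2 = t⁻¹ := by
      rw [← Real.rpow_natCast (t ^ (-(1/2):ℝ)) 2, ← Real.rpow_mul ht.le]
      norm_num
      exact Real.rpow_neg_one t
    have h3 : mn^2 ≤ t⁻¹ := by rw [← h2]; exact pow_le_pow_left₀ hmn0 h1 2
    calc t * mn^2 ≤ t * t⁻¹ := by nlinarith
      _ = 1 := mul_inv_cancel₀ ht.ne'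
  set s : ℝ := b * mn with hs
  have hs0 : 0 ≤ s := mul_nonneg hb hmn0
  have hsb : s ≤ b := by nlinarith
  have hts : t * s^2 ≤ b^2 := by
    have : s^2 = b^2 * mn^2 := by rw [hs]; ring
    nlinarith [sq_nonneg b]
  set a : ℝ := if 0 ≤ x then -s else s with ha
  have haabs : |a| ≤ b := by
    rw [ha]; split <;> simp [abs_le] <;> constructor <;> linarith
  have hta : t * a^2 ≤ b^2 := by
    have : a^2 = s^2 := by rw [ha]; split <;> ring
    rw [this]; exact hts
  have hxa : (x : ℝ) * a = -(|(x:ℝ)| * s) := by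
    rw [ha]; rcases le_or_gt 0 x with h | h
    · rw [if_pos h, abs_of_nonneg (by exact_mod_cast h)]; ring
    · rw [if_neg (not_le.2 h), abs_of_neg (by exact_mod_cast h)]; ring
  -- the function g
  set g : ℂ → ℂ := fun z => Complex.exp (-(x : ℂ) * Complex.I * z) *
      Complex.exp (-(t : ℂ) * phiC m r z) with hg
  -- rewrite hk
  have hk_eq : hk m r t x = (2 * Real.pi)⁻¹ * (∫ θ in (-Real.pi)..Real.pi, g θ).re := by
    rw [hk]
    have h1 : (∫ θ in (-Real.pi)..Real.pi,
        Complex.exp (-(x : ℂ) * Complex.I * (θ : ℂ)) *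
          Complex.exp (-(t : ℂ) * ((phiFn m r θ : ℝ) : ℂ))) =
        ∫ θ in (-Real.pi)..Real.pi, g θ := by
      apply intervalIntegral.integral_congr
      intro θ _
      rw [hg]
      simp only [phiC_ofReal]
    rw [h1, show (2 * (Real.pi : ℂ)) = (((2 * Real.pi : ℝ)) : ℂ) by push_cast; ring,
      ← Complex.ofReal_inv, Complex.re_ofReal_mul]
  -- contour shift
  have hshift : (∫ θ in (-Real.pi)..Real.pi, g θ) =
      ∫ θ in (-Real.pi)..Real.pi, g (θ + a * Complex.I) :=
    contour_shift g (g_diff m r t x) (g_periodic m r t x) a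
  -- pointwise bound on the shifted integrand
  have hpt : ∀ θ ∈ Set.Icc (-Real.pi) Real.pi, ‖g (θ + a * Complex.I)‖ ≤
      Real.exp (-(|(x:ℝ)| * s)) * (Real.exp M * Real.exp (-t * phiFn m r θ)) := by
    intro θ _
    rw [hg]
    simp only [norm_mul, Complex.norm_exp]
    rw [xa_re, hxa]
    apply mul_le_mul_of_nonneg_left _ (Real.exp_nonneg _)
    rw [show (-(t:ℂ) * phiC m r ((θ:ℂ) + (a:ℂ) * Complex.I)) =
        (((-t : ℝ)) : ℂ) * phiC m r ((θ:ℂ) + (a:ℂ) * Complex.I) by push_cast; ring]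
    rw [Complex.re_ofReal_mul, phiC_re, ← Real.exp_add, Real.exp_le_exp]
    have hsum : t * (∑ k ∈ Finset.Icc 1 m,
        (r k * (1 - Real.cos (k*θ)) - r k * (1 - Real.cos (k*θ) * Real.cosh (k*a)))) ≤ M := by
      rw [Finset.mul_sum, hM]
      apply Finset.sum_le_sum
      intro k hk
      have hrk : 0 ≤ r k := (hr k hk).le
      have hck := cosh_sub_one_le (k * a) (k * b) (by
        rw [abs_mul, Nat.abs_cast]
        exact mul_le_mul_of_nonneg_left haabs (Nat.cast_nonneg k))
      have hcosh1 : 1 ≤ Real.cosh (k * a) := Real.one_le_cosh _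
      have hcos1 : Real.cos (k * θ) ≤ 1 := Real.cos_le_one _
      have hcosm1 : -1 ≤ Real.cos (k * θ) := Real.neg_one_le_cos _
      have hexp : 0 < Real.exp (k * b) := Real.exp_pos _
      have hkk : t * (k*a)^2 ≤ (k*b)^2 := by
        have h1 : (k*a)^2 = (k:ℝ)^2 * a^2 := by ring
        have h2 : ((k:ℝ)*b)^2 = (k:ℝ)^2 * b^2 := by ring
        rw [h1, h2, ← mul_assoc, mul_comm t ((k:ℝ)^2), mul_assoc]
        exact mul_le_mul_of_nonneg_left hta (by positivity)
      have key : t * (Real.cosh (k*a) - 1) ≤ (k*b)^2/2 * Real.exp (k*b) := by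
        calc t * (Real.cosh (k*a) - 1) ≤ t * ((k*a)^2/2 * Real.exp (k*b)) := by
              apply mul_le_mul_of_nonneg_left hck ht.le
          _ = (t * (k*a)^2)/2 * Real.exp (k*b) := by ring
          _ ≤ (k*b)^2/2 * Real.exp (k*b) := by nlinarith
      -- goal: t * (r k * (1 - cos kθ) - r k * (1 - cos kθ * cosh ka)) ≤ r k * ((kb)^2/2 e^{kb})
      have expand : t * (r k * (1 - Real.cos (k*θ)) - r k * (1 - Real.cos (k*θ) * Real.cosh (k*a)))
          = r k * (Real.cos (k*θ) * (t * (Real.cosh (k*a) - 1))) := by ring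
      calc t * (r k * (1 - Real.cos (k*θ)) - r k * (1 - Real.cos (k*θ) * Real.cosh (k*a)))
          = r k * (Real.cos (k*θ) * (t * (Real.cosh (k*a) - 1))) := expand
        _ ≤ r k * (t * (Real.cosh (k*a) - 1)) := by
            nlinarith [mul_nonneg (mul_nonneg hrk (sub_nonneg.2 hcos1))
              (mul_nonneg ht.le (sub_nonneg.2 hcosh1))]
        _ ≤ r k * ((k*b)^2/2 * Real.exp (k*b)) := mul_le_mul_of_nonneg_left key hrk
    rw [Finset.sum_sub_distrib, mul_sub] at hsum
    have hphi : phiFn m r θ = ∑ k ∈ Finset.Icc 1 m, r k * (1 - Real.cos (k*θ)) := rfl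
    rw [hphi]
    linarith
  -- integral bound
  have hnpp : -Real.pi ≤ Real.pi := by linarith
  have hgc : Continuous fun θ : ℝ => ‖g (θ + a * Complex.I)‖ := by
    apply Continuous.norm
    exact (g_diff m r t x).continuous.comp (Complex.continuous_ofReal.add continuous_const)
  have hbc : Continuous fun θ : ℝ =>
      Real.exp (-(|(x:ℝ)| * s)) * (Real.exp M * Real.exp (-t * phiFn m r θ)) := by
    apply continuous_const.mul
    exact continuous_const.mul
      (Real.continuous_exp.comp (continuous_const.mul (phiFn_continuous m r)))
  have hint : ‖∫ θ in (-Real.pi)..Real.pi, g (θ + a * Complex.I)‖ ≤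
      Real.exp (-(|(x:ℝ)| * s)) * (Real.exp M *
        ∫ θ in (-Real.pi)..Real.pi, Real.exp (-t * phiFn m r θ)) := by
    calc ‖∫ θ in (-Real.pi)..Real.pi, g (θ + a * Complex.I)‖
        ≤ ∫ θ in (-Real.pi)..Real.pi, ‖g (θ + a * Complex.I)‖ :=
          intervalIntegral.norm_integral_le_integral_norm hnpp
      _ ≤ ∫ θ in (-Real.pi)..Real.pi,
            Real.exp (-(|(x:ℝ)| * s)) * (Real.exp M * Real.exp (-t * phiFn m r θ)) :=
          intervalIntegral.integral_mono_on hnpp (hgc.intervalIntegrable _ _)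
            (hbc.intervalIntegrable _ _) hpt
      _ = Real.exp (-(|(x:ℝ)| * s)) * (Real.exp M *
            ∫ θ in (-Real.pi)..Real.pi, Real.exp (-t * phiFn m r θ)) := by
          rw [intervalIntegral.integral_const_mul, intervalIntegral.integral_const_mul]
  have hgauss := gauss_int_le m hm r hr t ht
  -- final chain
  rw [hk_eq, hshift]
  have hre : (∫ θ in (-Real.pi)..Real.pi, g (θ + a * Complex.I)).re ≤
      ‖∫ θ in (-Real.pi)..Real.pi, g (θ + a * Complex.I)‖ := Complex.re_le_norm _
  have hKnn : 0 ≤ K := by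
    rw [hK]; have := Real.sqrt_nonneg (Real.pi / (2 * r 1 / Real.pi^2)); linarith
  have hgint_nn : 0 ≤ ∫ θ in (-Real.pi)..Real.pi, Real.exp (-t * phiFn m r θ) := by
    apply intervalIntegral.integral_nonneg hnpp
    intro θ _; exact Real.exp_nonneg _
  have hfinal : (∫ θ in (-Real.pi)..Real.pi, g (θ + a * Complex.I)).re ≤
      Real.exp (-(|(x:ℝ)| * s)) * (Real.exp M * (K * mn)) := by
    refine le_trans hre (le_trans hint ?_)
    apply mul_le_mul_of_nonneg_left _ (Real.exp_nonneg _)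
    apply mul_le_mul_of_nonneg_left _ (Real.exp_nonneg _)
    exact hgauss
  have h2πinv : 0 < (2 * Real.pi)⁻¹ := by positivity
  calc (2 * Real.pi)⁻¹ * (∫ θ in (-Real.pi)..Real.pi, g (θ + a * Complex.I)).re
      ≤ (2 * Real.pi)⁻¹ * (Real.exp (-(|(x:ℝ)| * s)) * (Real.exp M * (K * mn))) :=
        mul_le_mul_of_nonneg_left hfinal h2πinv.le
    _ = (2 * Real.pi)⁻¹ * Real.exp M * K * mn * Real.exp (-b * |(x:ℝ)| * mn) := by
        rw [show -b * |(x:ℝ)| * mn = -(|(x:ℝ)| * s) by rw [hs]; ring]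
        ring
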